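/- Let k ≥ 3 be an integer, let m ≥ 0 and q be real numbers with q ≤ (k−1)/(2k²)·h(m), and set m' := (k−1)²·m/k² + q. If m' ≥ 0, then m'/(k−1)² + (k−2)/(2(k−1)²)·h(m') ≤ m/k² + (k−1)/(2k²)·h(m). -/

import Mathlib

noncomputable def hfun (x : ℝ) : ℝ := Real.sqrt (2 * x + 1 / 4) - 1 / 2

lemma hfun_key (x : ℝ) (hx : 0 ≤ x) :
    0 ≤ hfun x ∧ hfun x ^ 2 + hfun x = 2 * x := by
  have h1 : (0:ℝ) ≤ 2 * x + 1 / 4 := by linarith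
  have h2 : Real.sqrt (2 * x + 1 / 4) ^ 2 = 2 * x + 1 / 4 := Real.sq_sqrt h1
  have h3 : 0 ≤ Real.sqrt (2 * x + 1 / 4) := Real.sqrt_nonneg _
  constructor
  · unfold hfun
    nlinarith [h2, h3]
  · unfold hfun
    nlinarith [h2]

set_option maxHeartbeats 1000000 in
/-- Lemma of Xu and Yu: if `m' = (k−1)²m/k² + q` with `q ≤ (k−1)/(2k²)·h(m)` and `m' ≥ 0`,
then `m'/(k−1)² + (k−2)/(2(k−1)²)·h(m') ≤ m/k² + (k−1)/(2k²)·h(m)`. -/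
theorem stmt_13 (k : ℕ) (hk : 3 ≤ k) (m q m' : ℝ) (hm : 0 ≤ m)
    (hq : q ≤ ((k : ℝ) - 1) / (2 * k ^ 2) * hfun m)
    (hm' : m' = ((k : ℝ) - 1) ^ 2 * m / k ^ 2 + q) (hm'0 : 0 ≤ m') :
    m' / ((k : ℝ) - 1) ^ 2 + ((k : ℝ) - 2) / (2 * ((k : ℝ) - 1) ^ 2) * hfun m'
      ≤ m / k ^ 2 + ((k : ℝ) - 1) / (2 * k ^ 2) * hfun m := by
  have hk3 : (3:ℝ) ≤ (k:ℝ) := by exact_mod_cast hk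
  obtain ⟨hs0, hs⟩ := hfun_key m hm
  obtain ⟨ht0, ht⟩ := hfun_key m' hm'0
  set s := hfun m
  set t := hfun m'
  have hkpos : (0:ℝ) < (k:ℝ)^2 := by positivity
  have hk1pos : (0:ℝ) < ((k:ℝ)-1)^2 := by nlinarith
  -- key: k²(t²+t) ≤ (k−1)²s² + k(k−1)s
  have key : (k:ℝ)^2 * (t^2 + t) ≤ ((k:ℝ)-1)^2 * s^2 + (k:ℝ)*((k:ℝ)-1)*s := by
    have h1 : m' ≤ ((k : ℝ) - 1) ^ 2 * m / k ^ 2 + ((k : ℝ) - 1) / (2 * k ^ 2) * s := by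
      rw [hm']; linarith
    have h2 := mul_le_mul_of_nonneg_left h1 (le_of_lt hkpos)
    rw [mul_add, mul_div_cancel₀ _ (ne_of_gt hkpos)] at h2
    have h3 : (k:ℝ)^2 * (((k:ℝ)-1)/(2*(k:ℝ)^2) * s) = ((k:ℝ)-1)*s/2 := by
      field_simp
    rw [h3] at h2
    nlinarith [h2]
  -- then k t ≤ (k−1) s
  have hts : (k:ℝ) * t ≤ ((k:ℝ)-1) * s := by
    by_contra h
    push_neg at h
    have h1 : 0 ≤ ((k:ℝ)-1) * s := by nlinarith
    have h2 : (((k:ℝ)-1)*s)^2 < ((k:ℝ)*t)^2 := by nlinarith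
    nlinarith [key, h2, h]
  have hP : (k:ℝ)^2*(t^2+((k:ℝ)-1)*t) ≤ ((k:ℝ)-1)^2*(s^2+(k:ℝ)*s) := by
    have h4 : (0:ℝ) ≤ (k:ℝ)*((k:ℝ)-2) := by nlinarith
    nlinarith [key, mul_le_mul_of_nonneg_left hts h4]
  have e1 : m' = (t^2+t)/2 := by linarith
  have e2 : m = (s^2+s)/2 := by linarith
  rw [e1, e2]
  have r1 : (t^2+t)/2/((k:ℝ)-1)^2 + ((k:ℝ)-2)/(2*((k:ℝ)-1)^2)*t
      = (t^2+((k:ℝ)-1)*t)/(2*((k:ℝ)-1)^2) := by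
    field_simp
    ring
  have r2 : (s^2+s)/2/(k:ℝ)^2 + ((k:ℝ)-1)/(2*(k:ℝ)^2)*s
      = (s^2+(k:ℝ)*s)/(2*(k:ℝ)^2) := by
    field_simp
    ring
  rw [r1, r2]
  rw [div_le_div_iff₀ (by positivity) (by positivity)]
  nlinarith [hP]
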